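/- Let G be a non-abelian finite n-centralizer group of conjugate type (m, 1), where m = p^k for a prime p and k ≥ 1. Then p divides n−2. -/

import Mathlib

/-- The set of element centralizers of a group `G`. -/
def centSet (G : Type*) [Group G] : Set (Subgroup G) :=
  Set.range fun x : G => Subgroup.centralizer {x}

namespace Stmt7Aux

open Subgroup

variable {G : Type*} [Group G] [Finite G]

lemma card_eq_ncard (H : Subgroup G) : Nat.card H = (H : Set G).ncard := by
  rw [← Nat.card_coe_set_eq]; rfl

lemma mem_cent_singleton_iff {x g : G} :
    g ∈ centralizer ({x} : Set G) ↔ Commute x g := by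
  rw [Subgroup.mem_centralizer_iff]
  constructor
  · intro h; exact h x rfl
  · rintro h y rfl; exact h

lemma self_mem_cent_singleton (x : G) : x ∈ centralizer ({x} : Set G) :=
  mem_cent_singleton_iff.mpr (Commute.refl x)

lemma eq_of_le_of_index_eq {H K : Subgroup G} (h : H ≤ K) (hi : H.index = K.index) :
    H = K := by
  have h1 := Subgroup.relIndex_mul_index h
  have hK0 : K.index ≠ 0 := Subgroup.index_ne_zero_of_finite
  rw [hi] at h1
  have h2 : H.relIndex K = 1 :=
    Nat.eq_of_mul_eq_mul_right (Nat.pos_of_ne_zero hK0) (by rw [h1, one_mul])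
  exact le_antisymm h (Subgroup.relIndex_eq_one.mp h2)

variable {p k : ℕ}

lemma cent_le_eq (hp : p.Prime)
    (htype : ∀ x : G, x ∉ center G → (centralizer ({x} : Set G)).index = p ^ k)
    {x y : G} (hx : x ∉ center G) (hy : y ∉ center G)
    (h : centralizer ({x} : Set G) ≤ centralizer ({y} : Set G)) :
    centralizer ({x} : Set G) = centralizer ({y} : Set G) :=
  eq_of_le_of_index_eq h (by rw [htype x hx, htype y hy])

/-- decomposition of an element into a `p`-part and a `p'`-part, both commuting with
everything that commutes with `x`. -/
lemma decomp (hp : p.Prime) (x : G) :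
    ∃ y w : G, x = y * w ∧ (∃ s, y ^ p ^ s = 1) ∧
      w ^ (ordCompl[p] (orderOf x)) = 1 ∧
      (∀ g : G, Commute g x → Commute g y) ∧ (∀ g : G, Commute g x → Commute g w) := by
  set o := orderOf x with ho
  have ho0 : o ≠ 0 := (orderOf_pos x).ne'
  set s := o.factorization p with hs
  set u := ordCompl[p] o with hu
  have hou : p ^ s * u = o := Nat.ordProj_mul_ordCompl_eq_self o p
  have hco : Nat.Coprime (p ^ s) u :=
    Nat.Coprime.pow_left s (Nat.coprime_ordCompl hp ho0)
  have hcoZ : IsCoprime ((p ^ s : ℕ) : ℤ) ((u : ℕ) : ℤ) := by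
    rw [Int.isCoprime_iff_gcd_eq_one, Int.gcd_natCast_natCast]
    exact hco
  obtain ⟨a, b, hab⟩ := hcoZ
  refine ⟨x ^ ((u : ℤ) * b), x ^ (((p ^ s : ℕ) : ℤ) * a), ?_, ⟨s, ?_⟩, ?_, ?_, ?_⟩
  · rw [← zpow_add]
    have h1 : (u : ℤ) * b + ((p ^ s : ℕ) : ℤ) * a = 1 := by linarith [hab]
    rw [h1, zpow_one]
  · rw [← zpow_natCast _ (p ^ s), ← zpow_mul]
    have h1 : (u : ℤ) * b * ((p ^ s : ℕ) : ℤ) = (o : ℤ) * b := by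
      rw [← hou]; push_cast; ring
    rw [h1, zpow_mul, zpow_natCast, pow_orderOf_eq_one, one_zpow]
  · rw [← zpow_natCast _ u, ← zpow_mul]
    have h1 : ((p ^ s : ℕ) : ℤ) * a * (u : ℤ) = (o : ℤ) * a := by
      rw [← hou]; push_cast; ring
    rw [h1, zpow_mul, zpow_natCast, pow_orderOf_eq_one, one_zpow]
  · exact fun g hg => hg.zpow_right _
  · exact fun g hg => hg.zpow_right _

lemma exists_pelem (hp : p.Prime) (hk : 1 ≤ k)
    (htype : ∀ x : G, x ∉ center G → (centralizer ({x} : Set G)).index = p ^ k)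
    {x₀ : G} (hx₀ : x₀ ∉ center G) :
    ∃ g : G, g ∉ center G ∧ ∃ j, g ^ p ^ j = 1 := by
  haveI : Fact p.Prime := ⟨hp⟩
  obtain ⟨P⟩ : Nonempty (Sylow p G) := Sylow.nonempty
  have hPle : ¬((P : Subgroup G) ≤ center G) := by
    intro hle
    have h1 : (center G).index ∣ (P : Subgroup G).index := Subgroup.index_dvd_of_le hle
    have h2 : (centralizer ({x₀} : Set G)).index ∣ (center G).index :=
      Subgroup.index_dvd_of_le (Subgroup.center_le_centralizer _)
    have h3 : p ∣ (P : Subgroup G).index := by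
      refine dvd_trans ?_ (h2.trans h1)
      rw [htype x₀ hx₀]
      exact dvd_pow_self p (by omega)
    exact P.not_dvd_index h3
  obtain ⟨g, hg, hgc⟩ := SetLike.not_le_iff_exists.mp hPle
  refine ⟨g, hgc, ?_⟩
  obtain ⟨j, hj⟩ := P.2 ⟨g, hg⟩
  exact ⟨j, by simpa using congrArg Subtype.val hj⟩

lemma lemD (hp : p.Prime) (hk : 1 ≤ k)
    (htype : ∀ x : G, x ∉ center G → (centralizer ({x} : Set G)).index = p ^ k)
    {w : G} (hw : w ∉ center G)
    (hall : ∀ g ∈ centralizer ({w} : Set G), (∃ j, g ^ p ^ j = 1) → g ∈ center G) :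
    False := by
  haveI : Fact p.Prime := ⟨hp⟩
  obtain ⟨g₀, hg₀, j₀, hj₀⟩ := exists_pelem hp hk htype hw
  -- the subgroup of central p-elements
  set Zp : Subgroup G :=
    { carrier := {g | g ∈ center G ∧ ∃ j, g ^ p ^ j = 1}
      one_mem' := ⟨Subgroup.one_mem _, 0, by simp⟩
      mul_mem' := by
        rintro a b ⟨ha, i, hi⟩ ⟨hb, j, hj⟩
        refine ⟨Subgroup.mul_mem _ ha hb, i + j, ?_⟩
        have hc : Commute a b := (Subgroup.mem_center_iff.mp ha b).symm
        have h1 : a ^ p ^ (i + j) = 1 := by rw [pow_add, pow_mul, hi, one_pow]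
        have h2 : b ^ p ^ (i + j) = 1 := by
          rw [pow_add, mul_comm (p ^ i), pow_mul, hj, one_pow]
        rw [hc.mul_pow, h1, h2, one_mul]
      inv_mem' := by
        rintro a ⟨ha, i, hi⟩
        exact ⟨Subgroup.inv_mem _ ha, i, by rw [inv_pow, hi, inv_one]⟩ } with hZpdef
  haveI hZpN : Zp.Normal := by
    constructor
    intro z hz g
    have h1 : g * z * g⁻¹ = z := by
      have h2 := Subgroup.mem_center_iff.mp hz.1 g
      rw [h2, mul_assoc, mul_inv_cancel, mul_one]
    rw [h1]; exact hz
  have hZpP : IsPGroup p Zp := by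
    intro g
    obtain ⟨j, hj⟩ := g.2.2
    exact ⟨j, Subtype.ext (by simpa using hj)⟩
  have hzpow : IsPGroup p (Subgroup.zpowers g₀) := by
    intro g
    obtain ⟨t, ht⟩ := Subgroup.mem_zpowers_iff.mp g.2
    refine ⟨j₀, Subtype.ext ?_⟩
    have h1 : (g : G) ^ p ^ j₀ = 1 := by
      rw [← ht, ← zpow_natCast, ← zpow_mul, mul_comm, zpow_mul, zpow_natCast, hj₀, one_zpow]
    simpa using h1
  set Q : Subgroup G := Zp ⊔ Subgroup.zpowers g₀ with hQdef
  have hQP : IsPGroup p Q := IsPGroup.to_sup_of_normal_left hZpP hzpow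
  have hQle : Q ≤ centralizer ({g₀} : Set G) := by
    refine sup_le (le_trans (fun g hg => hg.1) (Subgroup.center_le_centralizer _)) ?_
    rw [Subgroup.zpowers_le]
    exact self_mem_cent_singleton g₀
  -- equal cardinalities of the two centralizers
  have hcw : (centralizer ({w} : Set G)).index = p ^ k := htype w hw
  have hcg : (centralizer ({g₀} : Set G)).index = p ^ k := htype g₀ hg₀
  have hcard_eq : Nat.card (centralizer ({g₀} : Set G)) = Nat.card (centralizer ({w} : Set G)) := by
    have e1 := Subgroup.card_mul_index (centralizer ({g₀} : Set G))
    have e2 := Subgroup.card_mul_index (centralizer ({w} : Set G))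
    rw [hcg] at e1; rw [hcw] at e2
    exact Nat.eq_of_mul_eq_mul_right (pow_pos hp.pos k) (e1.trans e2.symm)
  -- Sylow subgroup of the centralizer of w
  obtain ⟨R⟩ : Nonempty (Sylow p (centralizer ({w} : Set G))) := Sylow.nonempty
  set R' : Subgroup G := Subgroup.map (centralizer ({w} : Set G)).subtype R with hR'def
  have hR'card : Nat.card R' = Nat.card R :=
    (Nat.card_congr (Subgroup.equivMapOfInjective _ _ (Subgroup.subtype_injective _)).toEquiv).symm
  have hR'le : R' ≤ Zp := by
    rintro g ⟨g', hg', rfl⟩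
    have hgmem : (g' : G) ∈ centralizer ({w} : Set G) := g'.2
    have hpe : ∃ j, ((centralizer ({w} : Set G)).subtype g') ^ p ^ j = 1 := by
      obtain ⟨j, hj⟩ := R.2 ⟨g', hg'⟩
      refine ⟨j, ?_⟩
      have := congrArg Subtype.val (congrArg Subtype.val hj)
      simpa using this
    exact ⟨hall _ hgmem hpe, hpe⟩
  have hRcard : Nat.card R = p ^ ((Nat.card (centralizer ({w} : Set G))).factorization p) :=
    R.card_eq_multiplicity
  obtain ⟨q, hq⟩ := IsPGroup.iff_card.mp hQP
  have hQdvd : Nat.card Q ∣ Nat.card (centralizer ({g₀} : Set G)) :=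
    Subgroup.card_dvd_of_le hQle
  have hle1 : Nat.card Q ≤ Nat.card R := by
    rw [hRcard, hq]
    refine Nat.pow_le_pow_right hp.pos ?_
    refine (Nat.Prime.pow_dvd_iff_le_factorization hp Nat.card_pos.ne').mp ?_
    rw [← hcard_eq, ← hq]
    exact hQdvd
  have hle2 : Nat.card R' ≤ Nat.card Zp := Subgroup.card_le_of_le hR'le
  have hlt : Nat.card Zp < Nat.card Q := by
    rw [card_eq_ncard, card_eq_ncard]
    refine Set.ncard_lt_ncard ?_ (Set.toFinite _)
    rw [Set.ssubset_iff_of_subset (SetLike.coe_subset_coe.mpr le_sup_left)]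
    refine ⟨g₀, ?_, ?_⟩
    · exact Subgroup.mem_sup_right (Subgroup.mem_zpowers g₀)
    · intro hmem
      exact hg₀ hmem.1
  omega

/-- Main structural lemma: every proper centralizer is the centralizer of a
noncentral `p`-element. -/
lemma L1 (hp : p.Prime) (hk : 1 ≤ k)
    (htype : ∀ x : G, x ∉ center G → (centralizer ({x} : Set G)).index = p ^ k)
    {x : G} (hx : x ∉ center G) :
    ∃ g : G, g ∉ center G ∧ (∃ j, g ^ p ^ j = 1) ∧
      centralizer ({g} : Set G) = centralizer ({x} : Set G) := by
  obtain ⟨y, w, hxyw, ⟨s, hys⟩, hwu, hcy, hcw⟩ := decomp hp x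
  have ho0 : orderOf x ≠ 0 := (orderOf_pos x).ne'
  by_cases hyc : y ∈ center G
  · -- the p-part is central, so the p'-part w is noncentral
    have hwc : w ∉ center G := by
      intro hwc
      refine hx ?_
      rw [hxyw]
      exact Subgroup.mul_mem _ hyc hwc
    have hxlew : centralizer ({x} : Set G) ≤ centralizer ({w} : Set G) := by
      intro g hg
      rw [mem_cent_singleton_iff] at hg ⊢
      exact ((hcw g hg.symm).symm)
    have hxw : centralizer ({x} : Set G) = centralizer ({w} : Set G) :=
      cent_le_eq hp htype hx hwc hxlew
    by_cases hex : ∃ g ∈ centralizer ({w} : Set G), g ∉ center G ∧ ∃ j, g ^ p ^ j = 1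
    · obtain ⟨g, hgw, hgc, j, hj⟩ := hex
      -- combine w and g
      have hcomm : Commute w g := mem_cent_singleton_iff.mp hgw
      have how : orderOf w ∣ ordCompl[p] (orderOf x) := orderOf_dvd_of_pow_eq_one hwu
      have hog : orderOf g ∣ p ^ j := orderOf_dvd_of_pow_eq_one hj
      have hco : Nat.Coprime (orderOf w) (orderOf g) := by
        have h1 : Nat.Coprime (ordCompl[p] (orderOf x)) p :=
          (Nat.coprime_ordCompl hp ho0).symm
        exact Nat.Coprime.coprime_dvd_left how
          (Nat.Coprime.coprime_dvd_right hog (h1.pow_right j))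
      set α : ℕ := (Nat.chineseRemainder hco 0 1).1 with hαdef
      obtain ⟨hα1, hα2⟩ := (Nat.chineseRemainder hco 0 1).2
      set β : ℕ := (Nat.chineseRemainder hco 1 0).1 with hβdef
      obtain ⟨hβ1, hβ2⟩ := (Nat.chineseRemainder hco 1 0).2
      set h : G := w * g with hhdef
      have hhg : h ^ α = g := by
        rw [hcomm.mul_pow]
        have e1 : w ^ α = 1 := orderOf_dvd_iff_pow_eq_one.mp (Nat.modEq_zero_iff_dvd.mp hα1)
        have e2 : g ^ α = g := by
          have := pow_eq_pow_iff_modEq (x := g) (n := α) (m := 1)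
          rw [this.mpr hα2, pow_one]
        rw [e1, e2, one_mul]
      have hhw : h ^ β = w := by
        rw [hcomm.mul_pow]
        have e1 : w ^ β = w := by
          have := pow_eq_pow_iff_modEq (x := w) (n := β) (m := 1)
          rw [this.mpr hβ1, pow_one]
        have e2 : g ^ β = 1 := orderOf_dvd_iff_pow_eq_one.mp (Nat.modEq_zero_iff_dvd.mp hβ2)
        rw [e1, e2, mul_one]
      have hhc : h ∉ center G := by
        intro hc
        refine hgc ?_
        rw [← hhg]
        exact Subgroup.pow_mem _ hc α
      have hhleg : centralizer ({h} : Set G) ≤ centralizer ({g} : Set G) := by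
        intro a ha
        rw [mem_cent_singleton_iff] at ha ⊢
        rw [← hhg]
        exact ha.pow_left α
      have hhlew : centralizer ({h} : Set G) ≤ centralizer ({w} : Set G) := by
        intro a ha
        rw [mem_cent_singleton_iff] at ha ⊢
        rw [← hhw]
        exact ha.pow_left β
      have e3 : centralizer ({h} : Set G) = centralizer ({g} : Set G) :=
        cent_le_eq hp htype hhc hgc hhleg
      have e4 : centralizer ({h} : Set G) = centralizer ({w} : Set G) :=
        cent_le_eq hp htype hhc hwc hhlew
      exact ⟨g, hgc, ⟨j, hj⟩, by rw [← e3, e4, ← hxw]⟩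
    · exfalso
      push_neg at hex
      refine lemD hp hk htype hwc fun g hg hpe => ?_
      by_contra hgc
      obtain ⟨j, hj⟩ := hpe
      exact hex g hg hgc j hj
  · -- the p-part y is noncentral
    have hxley : centralizer ({x} : Set G) ≤ centralizer ({y} : Set G) := by
      intro g hg
      rw [mem_cent_singleton_iff] at hg ⊢
      exact ((hcy g hg.symm).symm)
    exact ⟨y, hyc, ⟨s, hys⟩,
      (cent_le_eq hp htype hx hyc hxley).symm⟩

end Stmt7Aux

/-- For a non-abelian finite `n`-centralizer group of conjugate type `(m, 1)` with
`m = p^k` (`p` prime, `k ≥ 1`), `p` divides `n - 2`. -/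
theorem stmt7 (G : Type*) [Group G] [Finite G]
    (hG : ¬∀ a b : G, a * b = b * a) (n m p k : ℕ) (hp : p.Prime) (hk : 1 ≤ k)
    (hm : m = p ^ k)
    (htype : ∀ x : G, x ∉ Subgroup.center G → (Subgroup.centralizer {x}).index = m)
    (hcard : (centSet G).ncard = n) :
    p ∣ (n - 2) := by
  classical
  haveI : Fact p.Prime := ⟨hp⟩
  subst hm
  cases nonempty_fintype G
  open Stmt7Aux Subgroup in
  -- a noncentral element
  obtain ⟨a, b, hab⟩ : ∃ a b : G, a * b ≠ b * a := by
    push_neg at hG; exact hG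
  have hanc : a ∉ center G := fun h => hab (Subgroup.mem_center_iff.mp h b).symm
  -- the finset of proper centralizers
  set S : Finset (Subgroup G) :=
    (Finset.univ.filter (fun x : G => x ∉ center G)).image
      (fun x => Subgroup.centralizer ({x} : Set G)) with hSdef
  have hSmem : ∀ C ∈ S, ∃ x : G, x ∉ center G ∧ Subgroup.centralizer ({x} : Set G) = C := by
    intro C hC
    simp only [hSdef, Finset.mem_image, Finset.mem_filter, Finset.mem_univ, true_and] at hC
    exact hC
  have hSne : S.Nonempty := ⟨Subgroup.centralizer ({a} : Set G),
    Finset.mem_image_of_mem _ (Finset.mem_filter.mpr ⟨Finset.mem_univ a, hanc⟩)⟩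
  have htop_not : (⊤ : Subgroup G) ∉ S := by
    intro h
    obtain ⟨x, hx, hxC⟩ := hSmem _ h
    exact hx (Subgroup.centralizer_eq_top_iff_subset.mp hxC rfl)
  have hcentSet : centSet G = insert (⊤ : Subgroup G) (S : Set (Subgroup G)) := by
    ext C
    simp only [centSet, Set.mem_range, Set.mem_insert_iff, Finset.coe_image,
      Set.mem_image, Finset.mem_coe, Finset.mem_filter, Finset.mem_univ, true_and, hSdef]
    constructor
    · rintro ⟨x, rfl⟩
      by_cases hx : x ∈ center G
      · left
        exact Subgroup.centralizer_eq_top_iff_subset.mpr (Set.singleton_subset_iff.mpr hx)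
      · right; exact ⟨x, hx, rfl⟩
    · rintro (rfl | ⟨x, _, rfl⟩)
      · exact ⟨1, Subgroup.centralizer_eq_top_iff_subset.mpr
          (Set.singleton_subset_iff.mpr (Subgroup.one_mem _))⟩
      · exact ⟨x, rfl⟩
  have hn : n = S.card + 1 := by
    rw [← hcard, hcentSet, Set.ncard_insert_of_notMem (by simpa using htop_not)
      (Set.toFinite _), Set.ncard_coe_finset]
  -- fiberwise counting of noncentral elements
  set NZ : Finset G := Finset.univ.filter (fun x : G => x ∉ center G) with hNZdef
  have hNZmem : ∀ x : G, x ∈ NZ ↔ x ∉ center G := by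
    intro x; rw [hNZdef]; simp
  have hfib : NZ.card =
      ∑ C ∈ S, (NZ.filter (fun x => Subgroup.centralizer ({x} : Set G) = C)).card := by
    refine Finset.card_eq_sum_card_fiberwise ?_
    intro x hx
    simp only [hNZdef, Finset.mem_filter, Finset.mem_univ, true_and] at hx
    simp only [hSdef, Finset.mem_image, Finset.mem_filter, Finset.mem_univ, true_and,
      hNZmem]
    exact Finset.mem_image_of_mem _ hx
  -- the subgroup of elements centralizing a proper centralizer
  have hBcard : ∀ C ∈ S,
      (NZ.filter (fun x => Subgroup.centralizer ({x} : Set G) = C)).card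
        + Nat.card (center G)
      = Nat.card (Subgroup.centralizer (C : Set G)) := by
    intro C hC
    obtain ⟨y, hy, hyC⟩ := hSmem C hC
    have hset : Finset.univ.filter (fun x : G => x ∈ Subgroup.centralizer (C : Set G)) =
        (NZ.filter (fun x => Subgroup.centralizer ({x} : Set G) = C)) ∪
          Finset.univ.filter (fun x : G => x ∈ center G) := by
      ext x
      simp only [Finset.mem_filter, Finset.mem_univ, true_and, Finset.mem_union,
        hNZmem]
      constructor
      · intro hxB
        by_cases hx : x ∈ center G
        · exact Or.inr hx
        · refine Or.inl ⟨hx, ?_⟩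
          have hle : C ≤ Subgroup.centralizer ({x} : Set G) := by
            intro c hc
            rw [Stmt7Aux.mem_cent_singleton_iff]
            exact (Subgroup.mem_centralizer_iff.mp hxB c hc).symm
          rw [← hyC] at hle ⊢
          exact ((Stmt7Aux.cent_le_eq hp htype hy hx hle).symm : _)
      · rintro (⟨hx, hxC⟩ | hx)
        · refine Subgroup.mem_centralizer_iff.mpr ?_
          intro h hh
          rw [← hxC] at hh
          exact (Stmt7Aux.mem_cent_singleton_iff.mp hh).eq.symm
        · exact Subgroup.center_le_centralizer (C : Set G) hx
    have hdisj : Disjoint (NZ.filter (fun x => Subgroup.centralizer ({x} : Set G) = C))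
        (Finset.univ.filter (fun x : G => x ∈ center G)) := by
      refine Finset.disjoint_left.mpr ?_
      intro x hx1 hx2
      simp only [Finset.mem_filter, Finset.mem_univ, true_and, hNZmem] at hx1 hx2
      exact hx1.1 hx2
    have h1 : Nat.card (Subgroup.centralizer (C : Set G)) =
        (Finset.univ.filter (fun x : G => x ∈ Subgroup.centralizer (C : Set G))).card := by
      rw [Nat.card_eq_fintype_card, Fintype.card_subtype]
    have h2 : Nat.card (center G) =
        (Finset.univ.filter (fun x : G => x ∈ center G)).card := by
      rw [Nat.card_eq_fintype_card, Fintype.card_subtype]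
    rw [h1, h2, hset, Finset.card_union_of_disjoint hdisj]
  -- p * |Z| divides each |centralizer of C|
  have hdvd : ∀ C ∈ S, p * Nat.card (center G) ∣
      Nat.card (Subgroup.centralizer (C : Set G)) := by
    intro C hC
    obtain ⟨x, hx, hxC⟩ := hSmem C hC
    obtain ⟨g, hgnc, hgp, hgC⟩ := Stmt7Aux.L1 hp hk htype hx
    have hZle : center G ≤ Subgroup.centralizer (C : Set G) :=
      Subgroup.center_le_centralizer _
    have hgB : g ∈ Subgroup.centralizer (C : Set G) := by
      refine Subgroup.mem_centralizer_iff.mpr ?_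
      intro h hh
      have hh' : h ∈ Subgroup.centralizer ({g} : Set G) := by
        rw [hgC, hxC]; exact hh
      exact (Stmt7Aux.mem_cent_singleton_iff.mp hh').eq.symm
    set B := Subgroup.centralizer (C : Set G) with hBdef
    set Z' : Subgroup B := (center G).subgroupOf B with hZ'def
    haveI : Z'.Normal := by
      constructor
      intro z hz b
      have hzZ : (z : G) ∈ center G := hz
      refine Subgroup.mem_subgroupOf.mpr ?_
      have h1 : ((b * z * b⁻¹ : B) : G) = (b : G) * (z : G) * (b : G)⁻¹ := by
        push_cast; ring_nf
      have h2 : (b : G) * (z : G) * (b : G)⁻¹ = (z : G) := by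
        rw [Subgroup.mem_center_iff.mp hzZ (b : G), mul_assoc, mul_inv_cancel, mul_one]
      rw [h1, h2]
      exact hzZ
    have hcardB : Nat.card B = Nat.card (B ⧸ Z') * Nat.card Z' :=
      Subgroup.card_eq_card_quotient_mul_card_subgroup Z'
    have hZ'card : Nat.card Z' = Nat.card (center G) :=
      Nat.card_congr (Subgroup.subgroupOfEquivOfLe hZle).toEquiv
    have hpq : p ∣ Nat.card (B ⧸ Z') := by
      have hgB' : (⟨g, hgB⟩ : B) ∉ Z' := fun hmem => hgnc (Subgroup.mem_subgroupOf.mp hmem)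
      set gbar := QuotientGroup.mk' Z' ⟨g, hgB⟩ with hgbar
      have h1 : gbar ≠ 1 := by
        rw [hgbar, Ne, QuotientGroup.mk'_apply, QuotientGroup.eq_one_iff]
        exact hgB'
      obtain ⟨j, hj⟩ := hgp
      have h2 : orderOf gbar ∣ p ^ j := by
        refine orderOf_dvd_of_pow_eq_one ?_
        rw [hgbar, ← map_pow]
        have h3 : (⟨g, hgB⟩ : B) ^ p ^ j = 1 := Subtype.ext (by simpa using hj)
        rw [h3, map_one]
      obtain ⟨i, hile, hi⟩ := (Nat.dvd_prime_pow hp).mp h2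
      have hi0 : i ≠ 0 := by
        rintro rfl
        rw [pow_zero] at hi
        exact h1 (orderOf_eq_one_iff.mp hi)
      exact (hi ▸ dvd_pow_self p hi0).trans (orderOf_dvd_natCard gbar)
    rw [hcardB, hZ'card]
    exact mul_dvd_mul hpq dvd_rfl
  -- summing up
  have hsumdvd : p * Nat.card (center G) ∣
      ∑ C ∈ S, Nat.card (Subgroup.centralizer (C : Set G)) :=
    Finset.dvd_sum hdvd
  have hsum : ∑ C ∈ S, Nat.card (Subgroup.centralizer (C : Set G)) =
      NZ.card + S.card * Nat.card (center G) := by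
    calc ∑ C ∈ S, Nat.card (Subgroup.centralizer (C : Set G))
        = ∑ C ∈ S, ((NZ.filter (fun x => Subgroup.centralizer ({x} : Set G) = C)).card
            + Nat.card (center G)) :=
          Finset.sum_congr rfl (fun C hC => (hBcard C hC).symm)
      _ = (∑ C ∈ S, (NZ.filter (fun x => Subgroup.centralizer ({x} : Set G) = C)).card)
            + S.card * Nat.card (center G) := by
          rw [Finset.sum_add_distrib, Finset.sum_const, smul_eq_mul]
      _ = NZ.card + S.card * Nat.card (center G) := by rw [← hfib]
  have hNZcard : NZ.card + Nat.card (center G) = Nat.card G := by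
    have h2 : Nat.card (center G) =
        (Finset.univ.filter (fun x : G => x ∈ center G)).card := by
      rw [Nat.card_eq_fintype_card, Fintype.card_subtype]
    have h3 : Nat.card G = (Finset.univ : Finset G).card := by
      rw [Nat.card_eq_fintype_card, Finset.card_univ]
    have h4 := Finset.card_filter_add_card_filter_not
      (s := (Finset.univ : Finset G)) (p := fun x : G => x ∉ center G)
    simp only [not_not] at h4
    rw [h2, h3, hNZdef]
    simpa using h4
  -- p * |Z| divides |G|
  have hpZ : p ∣ (center G).index := by
    have h2 : (Subgroup.centralizer ({a} : Set G)).index ∣ (center G).index :=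
      Subgroup.index_dvd_of_le (Subgroup.center_le_centralizer _)
    rw [htype a hanc] at h2
    exact (dvd_pow_self p (by omega)).trans h2
  have hpzG : p * Nat.card (center G) ∣ Nat.card G := by
    rw [← Subgroup.card_mul_index (center G), mul_comm (Nat.card (center G))]
    exact mul_dvd_mul hpZ dvd_rfl
  -- final arithmetic
  have hz1 : 1 ≤ Nat.card (center G) := Nat.card_pos
  have hS1 : 1 ≤ S.card := Finset.card_pos.mpr hSne
  have hkey : ∑ C ∈ S, Nat.card (Subgroup.centralizer (C : Set G)) =
      Nat.card G + (S.card - 1) * Nat.card (center G) := by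
    have h4 : (S.card - 1) * Nat.card (center G) + Nat.card (center G)
        = S.card * Nat.card (center G) := by
      obtain ⟨t, ht⟩ := Nat.exists_eq_add_of_le hS1
      rw [ht, Nat.add_sub_cancel_left]
      ring
    omega
  have hfinal : p * Nat.card (center G) ∣ (S.card - 1) * Nat.card (center G) := by
    have h1 : (S.card - 1) * Nat.card (center G) =
        (∑ C ∈ S, Nat.card (Subgroup.centralizer (C : Set G))) - Nat.card G := by
      omega
    rw [h1]
    exact Nat.dvd_sub hsumdvd hpzG
  have hp2 : p ∣ S.card - 1 := (Nat.mul_dvd_mul_iff_right hz1).mp hfinal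
  have : n - 2 = S.card - 1 := by omega
  rw [this]
  exact hp2
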